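/- Any real Hamiltonian H = y^2 + P(x) with deg P = 5 whose level sets contain an oval can be brought, by a real affine change of x, rescaling of y, and adding a constant, to the normal form H = (1/2)y^2 − (λμ/2)x^2 + ((λ+μ+λμ)/3)x^3 − ((1+λ+μ)/4)x^4 + (1/5)x^5, where either 0 ≤ μ ≤ λ ≤ 1 (real case) or λ and μ are complex conjugates. -/

import Mathlib

open Real Complex Polynomial



private lemma evalMapC (p : Polynomial ℝ) (x : ℝ) :
    (p.map (algebraMap ℝ ℂ)).eval ((x : ℝ) : ℂ) = ((p.eval x : ℝ) : ℂ) := by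
  rw [Polynomial.eval_map]
  exact Polynomial.eval₂_at_apply (algebraMap ℝ ℂ) x

private lemma no_root_sign (g : Polynomial ℝ) (hg : ∀ x, g.eval x ≠ 0) :
    (∀ x, 0 < g.eval x) ∨ (∀ x, g.eval x < 0) := by
  by_contra hcon
  push_neg at hcon
  obtain ⟨⟨b, hb⟩, ⟨a, ha⟩⟩ := hcon
  have hb' : g.eval b < 0 := lt_of_le_of_ne hb (hg b)
  have ha' : 0 < g.eval a := lt_of_le_of_ne ha (Ne.symm (hg a))
  obtain ⟨x, -, hx⟩ := intermediate_value_uIcc (f := fun x => g.eval x) (a := b) (b := a)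
    (g.continuous_aeval.continuousOn) (Set.mem_uIcc.2 (Or.inl ⟨hb'.le, ha'.le⟩))
  exact hg x hx

private lemma odd_deg_root (g : Polynomial ℝ) (hodd : Odd g.natDegree) : ∃ x, g.eval x = 0 := by
  by_contra hc
  push_neg at hc
  have hdpos : 0 < g.natDegree := by
    rcases Nat.eq_zero_or_pos g.natDegree with h | h
    · rw [h] at hodd; exact absurd hodd (by decide)
    · exact h
  have hdeg : 0 < g.degree := natDegree_pos_iff_degree_pos.mp hdpos
  set gn := g.comp (-X) with hgn
  have hgneval : ∀ x : ℝ, gn.eval x = g.eval (-x) := by intro x; simp [hgn]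
  have hgnlc : gn.leadingCoeff = -g.leadingCoeff := by
    rw [hgn, leadingCoeff_comp (by simp)]
    simp [hodd.neg_one_pow]
  have hgnnd : gn.natDegree = g.natDegree := by rw [hgn, natDegree_comp]; simp
  have hgndeg : 0 < gn.degree := natDegree_pos_iff_degree_pos.mp (hgnnd ▸ hdpos)
  rcases no_root_sign g hc with hpos | hneg
  · rcases lt_or_ge 0 g.leadingCoeff with hlc | hlc
    · obtain ⟨x, hx⟩ := ((tendsto_atBot_of_leadingCoeff_nonpos gn hgndeg
        (by rw [hgnlc]; linarith)).eventually_le_atBot (-1)).exists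
      have := hpos (-x); rw [← hgneval x] at this; linarith
    · obtain ⟨x, hx⟩ := ((tendsto_atBot_of_leadingCoeff_nonpos g hdeg hlc).eventually_le_atBot
        (-1)).exists
      have := hpos x; linarith
  · rcases lt_or_ge g.leadingCoeff 0 with hlc | hlc
    · obtain ⟨x, hx⟩ := ((tendsto_atTop_of_leadingCoeff_nonneg gn hgndeg
        (by rw [hgnlc]; linarith)).eventually_ge_atTop 1).exists
      have := hneg (-x); rw [← hgneval x] at this; linarith
    · obtain ⟨x, hx⟩ := ((tendsto_atTop_of_leadingCoeff_nonneg g hdeg hlc).eventually_ge_atTop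
        1).exists
      have := hneg x; linarith

private lemma list_len4 {α : Type*} {l : List α} (h : l.length = 4) :
    ∃ a b c d, l = [a, b, c, d] := by
  rcases l with _ | ⟨a, l⟩; · simp at h
  rcases l with _ | ⟨b, l⟩; · simp at h
  rcases l with _ | ⟨c, l⟩; · simp at h
  rcases l with _ | ⟨d, l⟩; · simp at h
  rcases l with _ | ⟨e, l⟩
  · exact ⟨a, b, c, d, rfl⟩
  · simp at h


private lemma structure4 (D : Polynomial ℝ) (hdeg : D.natDegree = 4) (x₁ x₂ : ℝ)
    (h1 : D.eval x₁ < 0) (h2 : 0 < D.eval x₂) :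
    ∃ (r0 r1 : ℝ) (z2 z3 : ℂ), r0 ≠ r1 ∧ 0 < D.leadingCoeff * (r1 - r0) ∧
      ((∃ t2 t3 : ℝ, z2 = (t2 : ℂ) ∧ z3 = (t3 : ℂ) ∧ 0 ≤ (t3 - r0) / (r1 - r0) ∧
          (t3 - r0) / (r1 - r0) ≤ (t2 - r0) / (r1 - r0) ∧ (t2 - r0) / (r1 - r0) ≤ 1) ∨
        (z3 = (starRingEnd ℂ) z2 ∧ z2.im ≠ 0)) ∧
      ∀ z : ℂ, (D.map (algebraMap ℝ ℂ)).eval z =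
        (D.leadingCoeff : ℂ) * (z - (r0 : ℂ)) * (z - (r1 : ℂ)) * (z - z2) * (z - z3) := by
  have hD0 : D ≠ 0 := fun h => by simp [h] at hdeg
  obtain ⟨g, hDg⟩ := D.prod_multiset_X_sub_C_dvd
  have hRprod0 : (D.roots.map fun a => X - C a).prod ≠ 0 := (monic_multisetProd_X_sub_C _).ne_zero
  have hg0 : g ≠ 0 := by rintro rfl; rw [mul_zero] at hDg; exact hD0 hDg
  have hroots : g.roots = 0 := by
    have hmul : ((D.roots.map fun a => X - C a).prod * g).roots
        = (D.roots.map fun a => X - C a).prod.roots + g.roots :=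
      roots_mul (hDg ▸ hD0)
    rw [← hDg, roots_multiset_prod_X_sub_C] at hmul
    exact (left_eq_add.mp hmul)
  have hgne : ∀ x, g.eval x ≠ 0 := by
    intro x hx
    have : x ∈ g.roots := mem_roots'.mpr ⟨hg0, hx⟩
    simp [hroots] at this
  have hm : Multiset.card D.roots + g.natDegree = 4 := by
    have hnd := natDegree_mul hRprod0 hg0
    rw [← hDg, natDegree_multiset_prod_X_sub_C_eq_card, hdeg] at hnd
    omega
  have hgeven : g.natDegree % 2 = 0 := by
    rcases Nat.even_or_odd g.natDegree with h | h
    · exact Nat.even_iff.mp h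
    · obtain ⟨x, hx⟩ := odd_deg_root g h; exact absurd hx (hgne x)
  have hlc0 : D.leadingCoeff ≠ 0 := leadingCoeff_ne_zero.mpr hD0
  set lc := D.leadingCoeff with hlc
  have hlcg : g.leadingCoeff = lc := by
    rw [hlc, hDg, leadingCoeff_mul, (monic_multisetProd_X_sub_C _).leadingCoeff, one_mul]
  have hcase : g.natDegree = 4 ∨ g.natDegree = 2 ∨ g.natDegree = 0 := by omega
  rcases hcase with hgd | hgd | hgd
  · -- no real roots : contradiction
    exfalso
    have hR0 : D.roots = 0 := Multiset.card_eq_zero.mp (by omega)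
    have hDeq : ∀ x, D.eval x = g.eval x := by intro x; rw [hDg, hR0]; simp
    rcases no_root_sign g hgne with hp | hn
    · rw [hDeq x₁] at h1; linarith [hp x₁]
    · rw [hDeq x₂] at h2; linarith [hn x₂]
  · -- two real roots, conjugate pair case
    obtain ⟨r, s, hrs⟩ := Multiset.card_eq_two.mp (show Multiset.card D.roots = 2 by omega)
    have hDfac2 : D = (X - C r) * (X - C s) * g := by
      rw [hDg, hrs]
      simp only [Multiset.insert_eq_cons, Multiset.map_cons, Multiset.map_singleton,
        Multiset.prod_cons, Multiset.prod_singleton]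
    have hDev : ∀ x, D.eval x = (x - r) * (x - s) * g.eval x := by
      intro x; rw [hDfac2]; simp
    by_cases hrseq : r = s
    · exfalso
      subst hrseq
      rcases no_root_sign g hgne with hp | hn
      · rw [hDev x₁] at h1; nlinarith [sq_nonneg (x₁ - r), hp x₁]
      · rw [hDev x₂] at h2; nlinarith [sq_nonneg (x₂ - r), hn x₂]
    · -- complex roots of g
      set gC := g.map (algebraMap ℝ ℂ) with hgCdef
      have hgC0 : gC ≠ 0 := map_ne_zero hg0
      have hgCdeg : gC.natDegree = 2 := by rw [hgCdef, natDegree_map, hgd]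
      obtain ⟨z, hz⟩ := Complex.exists_root (f := gC)
        (by rw [degree_eq_natDegree hgC0, hgCdeg]; decide)
      have hzim : z.im ≠ 0 := by
        intro h0
        have hz' : z = ((z.re : ℝ) : ℂ) := Complex.ext rfl (by simp [h0])
        rw [IsRoot, hz', hgCdef, evalMapC] at hz
        exact hgne z.re (by exact_mod_cast hz)
      have hzc : gC.eval ((starRingEnd ℂ) z) = 0 := by
        have hconj := Polynomial.aeval_conj (K := ℂ) g z
        have h1' : (aeval z g : ℂ) = gC.eval z := by rw [aeval_def, eval₂_eq_eval_map, hgCdef]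
        have h2' : (aeval ((starRingEnd ℂ) z) g : ℂ) = gC.eval ((starRingEnd ℂ) z) := by
          rw [aeval_def, eval₂_eq_eval_map, hgCdef]
        rw [h1', h2', hz] at hconj
        simpa using hconj
      have hzne : (starRingEnd ℂ) z ≠ z := by
        intro h; exact hzim (Complex.conj_eq_iff_im.mp h)
      have hcard : Multiset.card gC.roots = 2 := by
        rw [← hgCdeg]
        exact (splits_iff_card_roots).mp (IsAlgClosed.splits gC)
      have hrootsgC : gC.roots = {z, (starRingEnd ℂ) z} := by
        obtain ⟨u, v, huv⟩ := Multiset.card_eq_two.mp hcard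
        have hzmem : z ∈ gC.roots := mem_roots'.mpr ⟨hgC0, hz⟩
        have hzcmem : (starRingEnd ℂ) z ∈ gC.roots := mem_roots'.mpr ⟨hgC0, hzc⟩
        rw [huv] at hzmem hzcmem ⊢
        simp only [Multiset.insert_eq_cons, Multiset.mem_cons, Multiset.mem_singleton]
          at hzmem hzcmem
        rcases hzmem with rfl | rfl
        · rcases hzcmem with h | h
          · exact absurd h hzne
          · rw [h]
        · rcases hzcmem with h | h
          · rw [h]; exact Multiset.cons_swap _ _ _
          · exact absurd h hzne
      have hgClc : gC.leadingCoeff = (lc : ℂ) := by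
        rw [hgCdef, leadingCoeff_map, hlcg]; rfl
      have hgCfac : gC = C ((lc : ℂ)) * ((X - C z) * (X - C ((starRingEnd ℂ) z))) := by
        have hfac := C_leadingCoeff_mul_prod_multiset_X_sub_C (p := gC)
          (by rw [hcard, hgCdeg])
        rw [hrootsgC, hgClc] at hfac
        rw [← hfac]
        simp [Multiset.insert_eq_cons]
      have hfactC : ∀ w : ℂ, (D.map (algebraMap ℝ ℂ)).eval w =
          (lc : ℂ) * (w - (r : ℂ)) * (w - (s : ℂ)) * (w - z) * (w - (starRingEnd ℂ) z) := by
        intro w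
        rw [hDfac2]
        simp only [Polynomial.map_mul, Polynomial.map_sub, Polynomial.map_X, Polynomial.map_C,
          eval_mul, eval_sub, eval_X, eval_C, ← hgCdef, hgCfac, Complex.coe_algebraMap]
        ring
      have hne0 : lc * (s - r) ≠ 0 := mul_ne_zero hlc0 (sub_ne_zero.mpr (Ne.symm hrseq))
      rcases hne0.lt_or_gt with hsgn | hsgn
      · exact ⟨s, r, z, (starRingEnd ℂ) z, fun h => hrseq h.symm, by nlinarith,
          Or.inr ⟨rfl, hzim⟩, fun w => by rw [hfactC w]; ring⟩
      · exact ⟨r, s, z, (starRingEnd ℂ) z, hrseq, hsgn,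
          Or.inr ⟨rfl, hzim⟩, fun w => by rw [hfactC w]⟩
  · -- four real roots
    have hgCc : g = C lc := by
      have h0 := eq_C_of_natDegree_eq_zero hgd
      rwa [show g.coeff 0 = g.leadingCoeff by rw [leadingCoeff, hgd], hlcg] at h0
    have hcard4 : Multiset.card D.roots = 4 := by omega
    obtain ⟨s0, s1, s2, s3, hleq⟩ := list_len4
      (show (Multiset.sort D.roots (· ≤ ·)).length = 4 by rw [Multiset.length_sort, hcard4])
    have hcoe : (([s0, s1, s2, s3] : List ℝ) : Multiset ℝ) = D.roots := by
      rw [← hleq]; exact Multiset.sort_eq _ _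
    have hsorted := Multiset.pairwise_sort D.roots (· ≤ ·)
    rw [hleq] at hsorted
    have h01 : s0 ≤ s1 := List.rel_of_pairwise_cons hsorted (a' := s1) (by simp)
    have h02 : s0 ≤ s2 := List.rel_of_pairwise_cons hsorted (a' := s2) (by simp)
    have h03 : s0 ≤ s3 := List.rel_of_pairwise_cons hsorted (a' := s3) (by simp)
    have h12 : s1 ≤ s2 := List.rel_of_pairwise_cons hsorted.of_cons (a' := s2) (by simp)
    have h13 : s1 ≤ s3 := List.rel_of_pairwise_cons hsorted.of_cons (a' := s3) (by simp)
    have h23 : s2 ≤ s3 := List.rel_of_pairwise_cons hsorted.of_cons.of_cons (a' := s3) (by simp)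
    have hDfac : D = (X - C s0) * (X - C s1) * (X - C s2) * (X - C s3) * C lc := by
      rw [hDg, hgCc, ← hcoe]
      simp only [Multiset.map_coe, List.map_cons, List.map_nil, Multiset.prod_coe,
        List.prod_cons, List.prod_nil, mul_one]
      ring
    have hDev : ∀ x, D.eval x = lc * ((x - s0) * (x - s1) * (x - s2) * (x - s3)) := by
      intro x; rw [hDfac]; simp; ring
    have hne03 : s0 ≠ s3 := by
      intro heq
      have e1 : s1 = s0 := le_antisymm (by linarith) h01
      have e2 : s2 = s0 := le_antisymm (by linarith) h02
      rcases hlc0.lt_or_gt with hneg | hpos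
      · rw [hDev x₂, e1, e2, heq] at h2; nlinarith [sq_nonneg ((x₂ - s3) * (x₂ - s3))]
      · rw [hDev x₁, e1, e2, heq] at h1; nlinarith [sq_nonneg ((x₁ - s3) * (x₁ - s3))]
    have hfactC : ∀ w : ℂ, (D.map (algebraMap ℝ ℂ)).eval w =
        (lc : ℂ) * (w - (s0 : ℂ)) * (w - (s1 : ℂ)) * (w - (s2 : ℂ)) * (w - (s3 : ℂ)) := by
      intro w
      rw [hDfac]
      simp only [Polynomial.map_mul, Polynomial.map_sub, Polynomial.map_X, Polynomial.map_C,
        eval_mul, eval_sub, eval_X, eval_C, Complex.coe_algebraMap]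
      ring
    rcases hlc0.lt_or_gt with hneg | hpos
    · -- lc < 0 : r0 = s3, r1 = s0
      have hσ : s0 - s3 < 0 := by
        rcases lt_or_eq_of_le h03 with h | h
        · linarith
        · exact absurd h hne03
      refine ⟨s3, s0, (s1 : ℂ), (s2 : ℂ), fun h => hne03 h.symm, by nlinarith, Or.inl ⟨s1, s2,
        rfl, rfl, ?_, ?_, ?_⟩, fun w => by rw [hfactC w]; ring⟩
      · rw [le_div_iff_of_neg hσ]; linarith
      · rw [div_le_div_right_of_neg hσ]; linarith
      · rw [div_le_one_of_neg hσ]; linarith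
    · -- lc > 0 : r0 = s0, r1 = s3
      have hσ : 0 < s3 - s0 := by
        rcases lt_or_eq_of_le h03 with h | h
        · linarith
        · exact absurd h hne03
      refine ⟨s0, s3, (s2 : ℂ), (s1 : ℂ), hne03, by nlinarith, Or.inl ⟨s2, s1,
        rfl, rfl, ?_, ?_, ?_⟩, fun w => by rw [hfactC w]; ring⟩
      · exact div_nonneg (by linarith) (by linarith)
      · exact (div_le_div_iff_of_pos_right hσ).mpr (by linarith)
      · rw [div_le_one hσ]; linarith

/-- Any real Hamiltonian `H = y² + P(x)` with `deg P = 5` whose level sets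
contain an oval (an oval of `{y² + P(x) = h}` is encoded by endpoints `α < β` with
`P(α) = P(β) = h`, `P < h` on `(α, β)` and `P' ≠ 0` at the endpoints) can be brought, by a
real affine change of `x`, a rescaling of `y`, an overall rescaling and adding a constant,
to the normal form `(1/2)y² − (λμ/2)x² + ((λ+μ+λμ)/3)x³ − ((1+λ+μ)/4)x⁴ + (1/5)x⁵`,
where either `0 ≤ μ ≤ λ ≤ 1` are real, or `λ, μ` are complex conjugate. -/
theorem stmt8 (P : Polynomial ℝ) (hdeg : P.natDegree = 5)
    (hoval : ∃ h α β : ℝ, α < β ∧ P.eval α = h ∧ P.eval β = h ∧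
      (∀ x ∈ Set.Ioo α β, P.eval x < h) ∧
      P.derivative.eval α ≠ 0 ∧ P.derivative.eval β ≠ 0) :
    ∃ lam mu : ℂ,
      ((lam.im = 0 ∧ mu.im = 0 ∧ 0 ≤ mu.re ∧ mu.re ≤ lam.re ∧ lam.re ≤ 1) ∨
        (mu = (starRingEnd ℂ) lam ∧ lam.im ≠ 0)) ∧
      ∃ σ c ρ e k : ℝ, σ ≠ 0 ∧ ρ ≠ 0 ∧ e ≠ 0 ∧
        ∀ X Y : ℝ,
          ((e * ((ρ * Y) ^ 2 + P.eval (σ * X + c)) + k : ℝ) : ℂ) =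
            (1 / 2) * (Y : ℂ) ^ 2 - (lam * mu / 2) * (X : ℂ) ^ 2 +
              ((lam + mu + lam * mu) / 3) * (X : ℂ) ^ 3 -
              ((1 + lam + mu) / 4) * (X : ℂ) ^ 4 + (1 / 5) * (X : ℂ) ^ 5 := by
  obtain ⟨h, α, β, hαβ, hPα, hPβ, hPlt, -, -⟩ := hoval
  set D := P.derivative with hD
  -- degree of D
  have hP0 : P ≠ 0 := fun hz => by simp [hz] at hdeg
  have h5 : P.coeff 5 ≠ 0 := by
    rw [← hdeg]; exact leadingCoeff_ne_zero.mpr hP0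
  have hD4 : D.natDegree = 4 := by
    have hcoeff : D.coeff 4 = P.coeff 5 * 5 := by
      rw [hD, coeff_derivative]; norm_num
    have hle : D.natDegree ≤ 4 := by
      have hh := natDegree_derivative_le P
      rw [hdeg] at hh
      exact le_trans hh (by norm_num)
    have hge : 4 ≤ D.natDegree := le_natDegree_of_ne_zero
      (by rw [hcoeff]; exact mul_ne_zero h5 (by norm_num))
    omega
  -- both signs for D via MVT
  set γ := (α + β) / 2 with hγdef
  have hγmem : γ ∈ Set.Ioo α β := ⟨by rw [hγdef]; linarith, by rw [hγdef]; linarith⟩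
  have hPγ : P.eval γ < h := hPlt γ hγmem
  obtain ⟨ξ, -, hξ⟩ := exists_hasDerivAt_eq_slope (fun x => P.eval x) (fun x => D.eval x)
    (show α < γ from hγmem.1) (P.continuous_aeval.continuousOn)
    (fun x _ => P.hasDerivAt x)
  obtain ⟨η, -, hη⟩ := exists_hasDerivAt_eq_slope (fun x => P.eval x) (fun x => D.eval x)
    (show γ < β from hγmem.2) (P.continuous_aeval.continuousOn)
    (fun x _ => P.hasDerivAt x)
  have hx1 : D.eval ξ < 0 := by
    rw [hξ, hPα]
    apply div_neg_of_neg_of_pos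
    · linarith
    · linarith [hγmem.1]
  have hx2 : 0 < D.eval η := by
    rw [hη, hPβ]
    apply div_pos
    · linarith
    · linarith [hγmem.2]
  obtain ⟨r0, r1, z2, z3, hr01, hsgn, hside, hfact⟩ := structure4 D hD4 ξ η hx1 hx2
  set a' := D.leadingCoeff with ha'
  set σ := r1 - r0 with hσdef
  have hσ0 : σ ≠ 0 := sub_ne_zero.mpr (Ne.symm hr01)
  have hea : 0 < a' * σ ^ 5 := by
    have h4 : 0 < σ ^ 4 := by positivity
    nlinarith [hsgn]
  set e := (a' * σ ^ 5)⁻¹ with hedef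
  have he : 0 < e := inv_pos.mpr hea
  set ρ := Real.sqrt (1 / (2 * e)) with hρdef
  have hρsq : ρ ^ 2 = 1 / (2 * e) := Real.sq_sqrt (by positivity)
  have hρ0 : ρ ≠ 0 := by rw [hρdef]; positivity
  have heρ : e * ρ ^ 2 = 1 / 2 := by
    rw [hρsq]; field_simp
  set k := -(e * P.eval r0) with hkdef
  set lam := ((z2 - (r0 : ℂ)) / (σ : ℂ)) with hlamdef
  set mu := ((z3 - (r0 : ℂ)) / (σ : ℂ)) with hmudef
  have hσC : (σ : ℂ) ≠ 0 := by exact_mod_cast hσ0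
  have hz2 : z2 = (σ : ℂ) * lam + (r0 : ℂ) := by
    rw [hlamdef]; field_simp; ring
  have hz3 : z3 = (σ : ℂ) * mu + (r0 : ℂ) := by
    rw [hmudef]; field_simp; ring
  refine ⟨lam, mu, ?_, σ, r0, ρ, e, k, hσ0, hρ0, ne_of_gt he, ?_⟩
  · rcases hside with ⟨t2, t3, ht2, ht3, hc1, hc2, hc3⟩ | ⟨hconj, him⟩
    · left
      have hlam : lam = (((t2 - r0) / σ : ℝ) : ℂ) := by
        rw [hlamdef, ht2]; push_cast; rfl
      have hmu : mu = (((t3 - r0) / σ : ℝ) : ℂ) := by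
        rw [hmudef, ht3]; push_cast; rfl
      rw [hlam, hmu]
      refine ⟨Complex.ofReal_im _, Complex.ofReal_im _, ?_, ?_, ?_⟩
      · simpa using hc1
      · simpa using hc2
      · simpa using hc3
    · right
      constructor
      · rw [hmudef, hlamdef, hconj]
        simp [map_div₀, Complex.conj_ofReal]
      · have him' : lam.im = z2.im / σ := by
          rw [hlamdef, Complex.div_ofReal_im]
          simp
        rw [him']
        exact div_ne_zero him hσ0
  · -- main identity
    set Pc := P.map (algebraMap ℝ ℂ) with hPcdef
    set q : Polynomial ℂ := Polynomial.C (σ : ℂ) * Polynomial.X + Polynomial.C ((r0 : ℝ) : ℂ)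
      with hqdef
    set F : Polynomial ℂ := Polynomial.C ((e : ℝ) : ℂ) * Pc.comp q + Polynomial.C ((k : ℝ) : ℂ)
      with hFdef
    set G : Polynomial ℂ := Polynomial.C ((1 : ℂ)/5) * X ^ 5
      - Polynomial.C ((1 + lam + mu)/4) * X ^ 4
      + Polynomial.C ((lam + mu + lam * mu)/3) * X ^ 3 - Polynomial.C (lam * mu / 2) * X ^ 2
      with hGdef
    have he' : ((e : ℝ) : ℂ) * ((σ : ℂ) ^ 5 * ((a' : ℝ) : ℂ)) = 1 := by
      have hre : (e * (σ ^ 5 * a') : ℝ) = 1 := by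
        rw [hedef]; have ha0 : a' ≠ 0 := by rintro h0; simp [h0] at hea
        field_simp
      exact_mod_cast hre
    have hr1 : (r1 : ℂ) = (σ : ℂ) + (r0 : ℂ) := by
      rw [hσdef]; push_cast; ring
    have hdq : Polynomial.derivative q = Polynomial.C ((σ : ℂ)) := by
      rw [hqdef]; simp
    have hdF : Polynomial.derivative F
        = Polynomial.C ((e : ℝ) : ℂ) * (Polynomial.C ((σ : ℂ))
          * ((D.map (algebraMap ℝ ℂ)).comp q)) := by
      rw [hFdef, Polynomial.derivative_add, Polynomial.derivative_C, add_zero,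
        Polynomial.derivative_mul, Polynomial.derivative_C, zero_mul, zero_add,
        Polynomial.derivative_comp, hdq, hPcdef, Polynomial.derivative_map, ← hD]
    have hderiv : Polynomial.derivative (F - G) = 0 := by
      apply Polynomial.funext
      intro w
      rw [Polynomial.derivative_sub, Polynomial.eval_sub, hdF]
      have hqe : q.eval w = (σ : ℂ) * w + ((r0 : ℝ) : ℂ) := by rw [hqdef]; simp
      rw [Polynomial.eval_mul, Polynomial.eval_mul, Polynomial.eval_C, Polynomial.eval_C,
        Polynomial.eval_comp, hqe, hfact]
      rw [hGdef]
      simp only [Polynomial.derivative_sub, Polynomial.derivative_add, Polynomial.derivative_mul,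
        Polynomial.derivative_C, Polynomial.derivative_X_pow, zero_mul, zero_add,
        Polynomial.eval_sub, Polynomial.eval_add, Polynomial.eval_mul, Polynomial.eval_C,
        Polynomial.eval_pow, Polynomial.eval_X, Polynomial.eval_zero, Polynomial.eval_natCast]
      rw [hz2, hz3, hr1]
      push_cast
      linear_combination (w * (w - 1) * (w - lam) * (w - mu)) * he'
    have hconst : F - G = Polynomial.C ((F - G).coeff 0) :=
      Polynomial.eq_C_of_derivative_eq_zero hderiv
    have hFG0 : (F - G).coeff 0 = 0 := by
      rw [Polynomial.coeff_zero_eq_eval_zero, Polynomial.eval_sub, hFdef, hGdef]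
      simp only [Polynomial.eval_add, Polynomial.eval_sub, Polynomial.eval_mul,
        Polynomial.eval_C, Polynomial.eval_comp, Polynomial.eval_pow, Polynomial.eval_X]
      have hq0 : q.eval 0 = ((r0 : ℝ) : ℂ) := by rw [hqdef]; simp
      rw [hq0, hPcdef, evalMapC, hkdef]
      push_cast
      ring
    have hFG : F = G := by
      have := hconst
      rw [hFG0, map_zero, sub_eq_zero] at this
      exact this
    intro X Y
    have hGX := congrArg (Polynomial.eval ((X : ℝ) : ℂ)) hFG
    have hq' : q.eval ((X : ℝ) : ℂ) = ((σ * X + r0 : ℝ) : ℂ) := by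
      rw [hqdef]; push_cast; simp
    rw [hFdef, hGdef] at hGX
    simp only [Polynomial.eval_add, Polynomial.eval_sub, Polynomial.eval_mul, Polynomial.eval_C,
      Polynomial.eval_comp, Polynomial.eval_pow, Polynomial.eval_X] at hGX
    rw [hq', hPcdef, evalMapC] at hGX
    have hy : ((e * ρ ^ 2 : ℝ) : ℂ) = 1/2 := by rw [heρ]; push_cast; norm_num
    have expand : (((e * ((ρ * Y) ^ 2 + P.eval (σ * X + r0)) + k : ℝ)) : ℂ)
        = ((e * ρ ^ 2 : ℝ) : ℂ) * (Y : ℂ) ^ 2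
          + (((e : ℝ) : ℂ) * ((P.eval (σ * X + r0) : ℝ) : ℂ) + ((k : ℝ) : ℂ)) := by
      push_cast; ring
    rw [expand, hy, hGX]
    ring
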